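/- Symmetry of the hyperbolic-type cubic system: if (b₁, b₂, b₃) with b₁ ≠ 0, b₂ ≠ 0, b₃ ≠ 0 is a solution of the system b₁(b₂² − b₃²) = j₁, b₂(b₁² − b₃²) = j₂, b₃(b₁² + b₂²) = j₃, then (−K/b₁, −K/b₂, K/b₃) is also a solution of the same system, where K = ((b₁ b₂ b₃)²)^{1/3} > 0 is the real cube root of (b₁ b₂ b₃)². -/
import Mathlib


/-- The real cube root. -/
noncomputable def cbrt (x : ℝ) : ℝ :=
  if 0 ≤ x then x ^ ((1 : ℝ) / 3) else -((-x) ^ ((1 : ℝ) / 3))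

/-- Symmetry of the hyperbolic-type cubic system: if `(b₁, b₂, b₃)` with all entries
nonzero solves `b₁(b₂² − b₃²) = j₁`, `b₂(b₁² − b₃²) = j₂`, `b₃(b₁² + b₂²) = j₃`, then so
does `(−K/b₁, −K/b₂, K/b₃)`, where `K = ((b₁ b₂ b₃)²)^{1/3} > 0`. -/
theorem hyperbolic_cubic_symmetry (j₁ j₂ j₃ b₁ b₂ b₃ : ℝ)
    (hb₁ : b₁ ≠ 0) (hb₂ : b₂ ≠ 0) (hb₃ : b₃ ≠ 0)
    (h₁ : b₁ * (b₂ ^ 2 - b₃ ^ 2) = j₁)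
    (h₂ : b₂ * (b₁ ^ 2 - b₃ ^ 2) = j₂)
    (h₃ : b₃ * (b₁ ^ 2 + b₂ ^ 2) = j₃)
    (K : ℝ) (hK : K = cbrt ((b₁ * b₂ * b₃) ^ 2)) :
    0 < K ∧
    (-K / b₁) * ((-K / b₂) ^ 2 - (K / b₃) ^ 2) = j₁ ∧
    (-K / b₂) * ((-K / b₁) ^ 2 - (K / b₃) ^ 2) = j₂ ∧
    (K / b₃) * ((-K / b₁) ^ 2 + (-K / b₂) ^ 2) = j₃ := by
  have hx' : (0:ℝ) ≤ (b₁ * b₂ * b₃) ^ 2 := by positivity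
  rw [cbrt, if_pos hx'] at hK
  have hKpos : 0 < K := by
    rw [hK]
    exact Real.rpow_pos_of_pos (by positivity) _
  have hK3 : K ^ 3 = (b₁ * b₂ * b₃) ^ 2 := by
    rw [hK, ← Real.rpow_natCast (((b₁ * b₂ * b₃) ^ 2) ^ ((1:ℝ)/3)) 3,
      ← Real.rpow_mul hx']
    norm_num
  subst h₁ h₂ h₃
  refine ⟨hKpos, ?_, ?_, ?_⟩
  · field_simp
    linear_combination (b₂^2 - b₃^2) * hK3
  · field_simp
    linear_combination (b₁^2 - b₃^2) * hK3
  · field_simp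
    linear_combination (b₁^2 + b₂^2) * hK3
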